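/- Any surjective group homomorphism from the free group on two generators to itself is an isomorphism. -/

import Mathlib

open Matrix

namespace FG2Hopf

abbrev V2 : Type := {v : Fin 2 → ℤ // v ≠ 0}

noncomputable instance : MulAction (SpecialLinearGroup (Fin 2) ℤ) V2 where
  smul g v := ⟨(g : Matrix (Fin 2) (Fin 2) ℤ) *ᵥ v.1, by
    intro h
    apply v.2
    have h2 : ((g⁻¹ : SpecialLinearGroup (Fin 2) ℤ) : Matrix (Fin 2) (Fin 2) ℤ) *ᵥ
        ((g : Matrix (Fin 2) (Fin 2) ℤ) *ᵥ v.1) = 0 := by rw [h]; simp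
    rw [mulVec_mulVec] at h2
    have h3 : ((g⁻¹ * g : SpecialLinearGroup (Fin 2) ℤ) : Matrix (Fin 2) (Fin 2) ℤ) *ᵥ v.1 = 0 := h2
    rw [inv_mul_cancel] at h3
    exact (one_mulVec _).symm.trans h3⟩
  one_smul v := Subtype.ext (by simp [HSMul.hSMul, SMul.smul])
  mul_smul g h v := Subtype.ext (by
    show ((g * h : SpecialLinearGroup (Fin 2) ℤ) : Matrix (Fin 2) (Fin 2) ℤ) *ᵥ v.1 = (g : Matrix (Fin 2) (Fin 2) ℤ) *ᵥ ((h : Matrix (Fin 2) (Fin 2) ℤ) *ᵥ v.1)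
    rw [mulVec_mulVec]; rfl)

@[simp] lemma smul_coe (g : SpecialLinearGroup (Fin 2) ℤ) (v : V2) :
    (g • v).1 = (g : Matrix (Fin 2) (Fin 2) ℤ) *ᵥ v.1 := rfl

def SA : SpecialLinearGroup (Fin 2) ℤ := ⟨!![1,3;0,1], by simp [Matrix.det_fin_two_of]⟩
def SB : SpecialLinearGroup (Fin 2) ℤ := ⟨!![1,0;3,1], by simp [Matrix.det_fin_two_of]⟩

def SS (x y : ℤ) : Prop := (0 ≤ x ∧ 0 ≤ y) ∨ (x ≤ 0 ∧ y ≤ 0)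
def OS (x y : ℤ) : Prop := (0 < x ∧ y < 0) ∨ (x < 0 ∧ 0 < y)

def Xs : Fin 2 → Set V2 :=
  ![{v | |v.1 1| < |v.1 0| ∧ SS (v.1 0) (v.1 1)},
    {v | |v.1 0| < |v.1 1| ∧ SS (v.1 0) (v.1 1)}]
def Ys : Fin 2 → Set V2 :=
  ![{v | |v.1 1| < |v.1 0| ∧ OS (v.1 0) (v.1 1)},
    {v | |v.1 0| < |v.1 1| ∧ OS (v.1 0) (v.1 1)}]

lemma vne (v : V2) : v.1 0 ≠ 0 ∨ v.1 1 ≠ 0 := by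
  rcases Function.ne_iff.mp v.2 with ⟨i, hi⟩
  fin_cases i
  · exact Or.inl (by simpa using hi)
  · exact Or.inr (by simpa using hi)

lemma sanov_injective :
    Function.Injective (FreeGroup.lift ![SA, SB] : FreeGroup (Fin 2) →* SpecialLinearGroup (Fin 2) ℤ) := by
  apply FreeGroup.injective_lift_of_ping_pong ![SA, SB] Xs Ys
  · intro i
    fin_cases i
    · exact ⟨⟨![1, 0], by intro h; simpa using congrFun h 0⟩, by simp [Xs, SS]⟩
    · exact ⟨⟨![0, 1], by intro h; simpa using congrFun h 1⟩, by simp [Xs, SS]⟩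
  · intro i j hij
    fin_cases i <;> fin_cases j <;> simp_all <;>
      exact Set.disjoint_left.mpr (fun v hv hv' => by
        simp only [Xs, Set.mem_setOf_eq, Fin.mk_zero, Fin.mk_one, Fin.isValue,
          Matrix.cons_val_zero, Matrix.cons_val_one, Matrix.head_cons] at hv hv'
        omega)
  · intro i j hij
    fin_cases i <;> fin_cases j <;> simp_all <;>
      exact Set.disjoint_left.mpr (fun v hv hv' => by
        simp only [Ys, Set.mem_setOf_eq, Fin.mk_zero, Fin.mk_one, Fin.isValue,
          Matrix.cons_val_zero, Matrix.cons_val_one, Matrix.head_cons] at hv hv'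
        omega)
  · intro i j
    fin_cases i <;> fin_cases j <;>
      exact Set.disjoint_left.mpr (fun v hv hv' => by
        simp only [Xs, Ys, Set.mem_setOf_eq, Fin.mk_zero, Fin.mk_one, Fin.isValue,
          Matrix.cons_val_zero, Matrix.cons_val_one, Matrix.head_cons] at hv hv'
        unfold SS OS at *
        omega)
  · intro i
    fin_cases i <;> rw [Set.smul_set_subset_iff] <;> intro v hv
    · simp only [Xs, Ys, Set.mem_compl_iff, Set.mem_setOf_eq, Fin.mk_zero, Fin.mk_one, Fin.isValue,
        Matrix.cons_val_zero, Matrix.cons_val_one, Matrix.head_cons, smul_coe, SA, SB] at hv ⊢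
      have h0 : (!![1,3;0,1] *ᵥ v.1) 0 = v.1 0 + 3 * v.1 1 := by
        simp [Matrix.mulVec, dotProduct, Fin.sum_univ_two]
      have h1 : (!![1,3;0,1] *ᵥ v.1) 1 = v.1 1 := by
        simp [Matrix.mulVec, dotProduct, Fin.sum_univ_two]
      change |(!![1,3;0,1] *ᵥ v.1) 1| < |(!![1,3;0,1] *ᵥ v.1) 0| ∧ SS ((!![1,3;0,1] *ᵥ v.1) 0) ((!![1,3;0,1] *ᵥ v.1) 1)
      rw [h0, h1]
      have hne := vne v
      unfold SS OS at *
      rcases abs_cases (v.1 0) with ⟨e1, s1⟩ | ⟨e1, s1⟩ <;>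
        rcases abs_cases (v.1 1) with ⟨e2, s2⟩ | ⟨e2, s2⟩ <;>
        rcases abs_cases (v.1 0 + 3 * v.1 1) with ⟨e3, s3⟩ | ⟨e3, s3⟩ <;> omega
    · simp only [Xs, Ys, Set.mem_compl_iff, Set.mem_setOf_eq, Fin.mk_zero, Fin.mk_one, Fin.isValue,
        Matrix.cons_val_zero, Matrix.cons_val_one, Matrix.head_cons, smul_coe, SA, SB] at hv ⊢
      have h0 : (!![1,0;3,1] *ᵥ v.1) 0 = v.1 0 := by
        simp [Matrix.mulVec, dotProduct, Fin.sum_univ_two]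
      have h1 : (!![1,0;3,1] *ᵥ v.1) 1 = 3 * v.1 0 + v.1 1 := by
        simp [Matrix.mulVec, dotProduct, Fin.sum_univ_two]
      change |(!![1,0;3,1] *ᵥ v.1) 0| < |(!![1,0;3,1] *ᵥ v.1) 1| ∧ SS ((!![1,0;3,1] *ᵥ v.1) 0) ((!![1,0;3,1] *ᵥ v.1) 1)
      rw [h0, h1]
      have hne := vne v
      unfold SS OS at *
      rcases abs_cases (v.1 0) with ⟨e1, s1⟩ | ⟨e1, s1⟩ <;>
        rcases abs_cases (v.1 1) with ⟨e2, s2⟩ | ⟨e2, s2⟩ <;>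
        rcases abs_cases (3 * v.1 0 + v.1 1) with ⟨e3, s3⟩ | ⟨e3, s3⟩ <;> omega
  · intro i
    fin_cases i <;> rw [Set.smul_set_subset_iff] <;> intro v hv
    · simp only [Xs, Ys, Set.mem_compl_iff, Set.mem_setOf_eq, Fin.mk_zero, Fin.mk_one, Fin.isValue,
        Pi.inv_apply, Matrix.cons_val_zero, Matrix.cons_val_one, Matrix.head_cons, smul_coe] at hv ⊢
      have hAi : ((SA⁻¹ : SpecialLinearGroup (Fin 2) ℤ) : Matrix (Fin 2) (Fin 2) ℤ)
          = !![1,-3;0,1] := by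
        change Matrix.adjugate (SA : Matrix (Fin 2) (Fin 2) ℤ) = _; simp [SA, Matrix.adjugate_fin_two_of]
      rw [hAi]
      have h0 : (!![1,-3;0,1] *ᵥ v.1) 0 = v.1 0 - 3 * v.1 1 := by
        simp [Matrix.mulVec, dotProduct, Fin.sum_univ_two]; ring
      have h1 : (!![1,-3;0,1] *ᵥ v.1) 1 = v.1 1 := by
        simp [Matrix.mulVec, dotProduct, Fin.sum_univ_two]
      rw [h0, h1]
      have hne := vne v
      unfold SS OS at *
      rcases abs_cases (v.1 0) with ⟨e1, s1⟩ | ⟨e1, s1⟩ <;>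
        rcases abs_cases (v.1 1) with ⟨e2, s2⟩ | ⟨e2, s2⟩ <;>
        rcases abs_cases (v.1 0 - 3 * v.1 1) with ⟨e3, s3⟩ | ⟨e3, s3⟩ <;> omega
    · simp only [Xs, Ys, Set.mem_compl_iff, Set.mem_setOf_eq, Fin.mk_zero, Fin.mk_one, Fin.isValue,
        Pi.inv_apply, Matrix.cons_val_zero, Matrix.cons_val_one, Matrix.head_cons, smul_coe] at hv ⊢
      have hBi : ((SB⁻¹ : SpecialLinearGroup (Fin 2) ℤ) : Matrix (Fin 2) (Fin 2) ℤ)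
          = !![1,0;-3,1] := by
        change Matrix.adjugate (SB : Matrix (Fin 2) (Fin 2) ℤ) = _; simp [SB, Matrix.adjugate_fin_two_of]
      rw [hBi]
      have h0 : (!![1,0;-3,1] *ᵥ v.1) 0 = v.1 0 := by
        simp [Matrix.mulVec, dotProduct, Fin.sum_univ_two]
      have h1 : (!![1,0;-3,1] *ᵥ v.1) 1 = v.1 1 - 3 * v.1 0 := by
        simp [Matrix.mulVec, dotProduct, Fin.sum_univ_two]; ring
      rw [h0, h1]
      have hne := vne v
      unfold SS OS at *
      rcases abs_cases (v.1 0) with ⟨e1, s1⟩ | ⟨e1, s1⟩ <;>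
        rcases abs_cases (v.1 1) with ⟨e2, s2⟩ | ⟨e2, s2⟩ <;>
        rcases abs_cases (v.1 1 - 3 * v.1 0) with ⟨e3, s3⟩ | ⟨e3, s3⟩ <;> omega

end FG2Hopf

open FG2Hopf

/-- Any surjective group homomorphism from the free group on two generators
to itself is an isomorphism (i.e. bijective). -/
theorem free_group_two_surjective_endo_bijective
    (φ : FreeGroup (Fin 2) →* FreeGroup (Fin 2))
    (hφ : Function.Surjective φ) : Function.Bijective φ := by
  refine ⟨(injective_iff_map_eq_one φ).mpr ?_, hφ⟩
  intro w hw
  by_contra hne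
  set ι := (FreeGroup.lift ![SA, SB] : FreeGroup (Fin 2) →* SpecialLinearGroup (Fin 2) ℤ) with hιdef
  have hι : ι w ≠ 1 := fun h => hne (sanov_injective (h.trans (_root_.map_one ι).symm))
  -- find an entry where ι w differs from 1
  have hmat : (ι w : Matrix (Fin 2) (Fin 2) ℤ) ≠ (1 : Matrix (Fin 2) (Fin 2) ℤ) := by
    intro h; exact hι (Subtype.ext (by simpa using h))
  obtain ⟨i, j, hij⟩ : ∃ i j, (ι w : Matrix (Fin 2) (Fin 2) ℤ) i j ≠ (1 : Matrix (Fin 2) (Fin 2) ℤ) i j := by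
    by_contra h
    push_neg at h
    exact hmat (Matrix.ext h)
  set d : ℤ := (ι w : Matrix (Fin 2) (Fin 2) ℤ) i j - (1 : Matrix (Fin 2) (Fin 2) ℤ) i j with hd
  have hd0 : d ≠ 0 := sub_ne_zero.mpr hij
  set N : ℕ := d.natAbs + 1 with hN
  -- the finite quotient
  set G := SpecialLinearGroup (Fin 2) (ZMod N) with hG
  have : NeZero N := ⟨by omega⟩
  have hGfin : Finite G := inferInstance
  set f : FreeGroup (Fin 2) →* G :=
    (SpecialLinearGroup.map (Int.castRingHom (ZMod N))).comp ι with hf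
  have hfw : f w ≠ 1 := by
    intro h
    have h2 : ((f w : Matrix (Fin 2) (Fin 2) (ZMod N))) i j
        = (1 : Matrix (Fin 2) (Fin 2) (ZMod N)) i j := by rw [h]; rfl
    have h3 : (((ι w : Matrix (Fin 2) (Fin 2) ℤ) i j : ℤ) : ZMod N)
        = (((1 : Matrix (Fin 2) (Fin 2) ℤ) i j : ℤ) : ZMod N) := by
      have e1 : ((f w : Matrix (Fin 2) (Fin 2) (ZMod N))) i j
          = (((ι w : Matrix (Fin 2) (Fin 2) ℤ) i j : ℤ) : ZMod N) := rfl
      have e2 : (1 : Matrix (Fin 2) (Fin 2) (ZMod N)) i j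
          = (((1 : Matrix (Fin 2) (Fin 2) ℤ) i j : ℤ) : ZMod N) := by
        rcases eq_or_ne i j with rfl | hij2
        · rw [Matrix.one_apply_eq, Matrix.one_apply_eq]; norm_num
        · rw [Matrix.one_apply_ne hij2, Matrix.one_apply_ne hij2]; norm_num
      rw [← e1, ← e2, h2]
    have h4 : ((d : ℤ) : ZMod N) = 0 := by
      rw [hd]; push_cast; rw [h3]; ring
    rw [ZMod.intCast_zmod_eq_zero_iff_dvd] at h4
    have h5 : N ∣ d.natAbs := by
      have := Int.natAbs_dvd_natAbs.mpr h4
      simpa using this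
    have h6 : N ≤ d.natAbs := Nat.le_of_dvd (Int.natAbs_pos.mpr hd0) h5
    omega
  -- counting argument: precomposition with φ is injective on the finite hom set
  have hfin : Finite (FreeGroup (Fin 2) →* G) := Finite.of_equiv _ FreeGroup.lift
  have hinj : Function.Injective
      (fun h : FreeGroup (Fin 2) →* G => h.comp φ) := by
    intro h1 h2 he
    refine MonoidHom.ext fun x => ?_
    obtain ⟨y, rfl⟩ := hφ x
    exact DFunLike.congr_fun he y
  obtain ⟨h, hh⟩ := (Finite.injective_iff_surjective.mp hinj) f
  have : f w = 1 := by
    rw [← hh]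
    show h (φ w) = 1
    rw [hw]
    exact _root_.map_one h
  exact hfw this
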